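/- Let 0 < p < ∞ and let m ∈ ℕ with m ≥ 2. There exists a constant C > 0 depending only on p and m such that for all j, k ∈ ℕ₀: (i) sup_{0 < h ≤ 2^{−k}} ‖Δ^m_h v_{j,0}‖_{L_p(ℝ)} ≤ C · 2^{−j/p}, and (ii) if k > j then sup_{0 < h ≤ 2^{−k}} ‖Δ^m_h v_{j,0}‖_{L_p(ℝ)} ≤ C · 2^{−k/p} · 2^{j−k}. -/

import Mathlib

open MeasureTheory Filter
open scoped ENNReal NNReal

noncomputable section

/-- The univariate hat function `v`. -/
def hatFn (x : ℝ) : ℝ := if 0 ≤ x ∧ x ≤ 1 then 1 - |2 * x - 1| else 0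

/-- Second difference with step `h` in coordinate `i`. -/
def secondDiff {d : ℕ} {K : Type*} [Field K] (i : Fin d) (h : ℝ)
    (f : (Fin d → ℝ) → K) (x : Fin d → ℝ) : K :=
  f (Function.update x i (x i + 2 * h)) - 2 * f (Function.update x i (x i + h)) + f x

/-- Iterated second differences over `e(j) = {i | j i ≠ -1}` with steps `2^{-j i - 1}`. -/
def iterDiff {d : ℕ} {K : Type*} [Field K] (j : Fin d → ℤ)
    (f : (Fin d → ℝ) → K) : (Fin d → ℝ) → K :=
  (Finset.filter (fun i => j i ≠ -1) Finset.univ).toList.foldr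
    (fun i g => secondDiff i ((2:ℝ) ^ (-(j i) - 1)) g) f

/-- The point `x_{j,k}`. -/
def xnode {d : ℕ} (j k : Fin d → ℤ) : Fin d → ℝ :=
  fun i => (2:ℝ) ^ (-(max (j i) 0)) * (k i : ℝ)

/-- Faber–Schauder coefficient `d²_{j,k}(f)`. -/
def faberCoeff {d : ℕ} {K : Type*} [Field K] (j k : Fin d → ℤ)
    (f : (Fin d → ℝ) → K) : K :=
  (-(1:K) / 2) ^ (Finset.filter (fun i => j i ≠ -1) Finset.univ).card *
    iterDiff j f (xnode j k)

/-- Univariate Faber functions on ℝ (translations over ℤ). -/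
def faberR (j k : ℤ) (x : ℝ) : ℝ :=
  if j = -1 then hatFn ((x + 1 + k) / 2) else hatFn ((2:ℝ) ^ j.toNat * x - k)

/-- Tensorized Faber functions on ℝ^d. -/
def faberFnR {d : ℕ} (j k : Fin d → ℤ) (x : Fin d → ℝ) : ℝ :=
  ∏ i, faberR (j i) (k i) (x i)

/-- Univariate Faber functions for the cube `[0,1]`. -/
def faberC (j k : ℤ) (x : ℝ) : ℝ :=
  if j = -1 then (if k = 0 then 1 - x else x) else hatFn ((2:ℝ) ^ j.toNat * x - k)

/-- Tensorized Faber functions for the cube `[0,1]^d`. -/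
def faberFnC {d : ℕ} (j k : Fin d → ℤ) (x : Fin d → ℝ) : ℝ :=
  ∏ i, faberC (j i) (k i) (x i)

/-- Index set `D_j`. -/
def Dj (j : ℤ) : Finset ℤ := if j = -1 then {0, 1} else Finset.Ico 0 (2 ^ j.toNat)

/-- Index set `D_j` in `d` dimensions. -/
def DjSet {d : ℕ} (j : Fin d → ℤ) : Finset (Fin d → ℤ) :=
  Fintype.piFinset fun i => Dj (j i)

/-- Fourier transform on ℝ^d. -/
def ftd {d : ℕ} (f : (Fin d → ℝ) → ℂ) (ξ : Fin d → ℝ) : ℂ :=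
  (((2 * Real.pi) ^ (-(d:ℝ) / 2) : ℝ) : ℂ) *
    ∫ x : Fin d → ℝ, Complex.exp (-Complex.I * ((∑ i, x i * ξ i : ℝ) : ℂ)) * f x

/-- Inverse Fourier transform on ℝ^d. -/
def ftdInv {d : ℕ} (f : (Fin d → ℝ) → ℂ) (ξ : Fin d → ℝ) : ℂ :=
  (((2 * Real.pi) ^ (-(d:ℝ) / 2) : ℝ) : ℂ) *
    ∫ x : Fin d → ℝ, Complex.exp (Complex.I * ((∑ i, x i * ξ i : ℝ) : ℂ)) * f x

/-- Univariate Fourier transform. -/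
def ft1 (f : ℝ → ℂ) (ξ : ℝ) : ℂ :=
  (((2 * Real.pi) ^ (-(1:ℝ) / 2) : ℝ) : ℂ) *
    ∫ x : ℝ, Complex.exp (-Complex.I * ((x * ξ : ℝ) : ℂ)) * f x

/-- A dyadic decomposition of unity on ℝ. -/
structure IsDyadicDecomposition (φ : ℕ → ℝ → ℝ) : Prop where
  smooth : ∀ n, ContDiff ℝ (⊤ : ℕ∞) (φ n)
  compSupp : ∀ n, HasCompactSupport (φ n)
  supp0 : Function.support (φ 0) ⊆ {x : ℝ | |x| ≤ 2}
  suppn : ∀ n : ℕ, 1 ≤ n →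
    Function.support (φ n) ⊆ {x : ℝ | (2:ℝ) ^ (n - 1) ≤ |x| ∧ |x| ≤ (2:ℝ) ^ (n + 1)}
  deriv_bound : ∀ l : ℕ, ∃ c : ℝ, ∀ (n : ℕ) (x : ℝ),
    (2:ℝ) ^ (n * l) * |iteratedDeriv l (φ n) x| ≤ c
  sum_one : ∀ x : ℝ, ∑' n, φ n x = 1

/-- Extension of `φ` by zero to negative integer indices. -/
def phiZ (φ : ℕ → ℝ → ℝ) (n : ℤ) : ℝ → ℝ := if 0 ≤ n then φ n.toNat else 0

/-- The building block `f_ℓ`. -/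
def fblock {d : ℕ} (φ : ℕ → ℝ → ℝ) (f : (Fin d → ℝ) → ℂ) (l : Fin d → ℤ) :
    (Fin d → ℝ) → ℂ :=
  ftdInv fun ξ => (∏ i, ((phiZ φ (l i) (ξ i) : ℝ) : ℂ)) * ftd f ξ

/-- The Besov norm `B_φ^{1/p}`. -/
def BnormE {d : ℕ} (φ : ℕ → ℝ → ℝ) (p : ℝ) (f : (Fin d → ℝ) → ℂ) : ℝ≥0∞ :=
  ∑' j : Fin d → ℕ, ENNReal.ofReal ((2:ℝ) ^ ((∑ i, (j i : ℝ)) / p)) *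
    eLpNorm (fblock φ f fun i => (j i : ℤ)) (ENNReal.ofReal p) volume

/-- The Triebel–Lizorkin norm `T_φ`. -/
def TnormE {d : ℕ} (φ : ℕ → ℝ → ℝ) (f : (Fin d → ℝ) → ℂ) : ℝ≥0∞ :=
  ∫⁻ x, ⨆ j : Fin d → ℕ,
    ENNReal.ofReal ((2:ℝ) ^ (∑ i, j i) * ‖fblock φ f (fun i => (j i : ℤ)) x‖)

/-- The Smolyak truncation `I_n f` of the Faber–Schauder series on the cube. -/
def smolyakC {d : ℕ} (n : ℕ) (f : (Fin d → ℝ) → ℂ) (x : Fin d → ℝ) : ℂ :=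
  ∑ j ∈ (Fintype.piFinset fun _ : Fin d => Finset.Icc (-1:ℤ) (n:ℤ)).filter
      (fun j => (∑ i, max (j i) 0) ≤ (n:ℤ)),
    ∑ k ∈ DjSet j, faberCoeff j k f * (faberFnC j k x : ℂ)

/-- The unit cube `[0,1]^d`. -/
def unitCube (d : ℕ) : Set (Fin d → ℝ) := Set.Icc 0 1

/-- The dyadic box of level `j` and position `k`. -/
def boxSet {d : ℕ} (j : Fin d → ℕ) (k : Fin d → ℤ) : Set (Fin d → ℝ) :=
  Set.univ.pi fun i =>
    Set.Icc ((2:ℝ) ^ (-(j i : ℤ)) * (k i : ℝ)) ((2:ℝ) ^ (-(j i : ℤ)) * ((k i : ℝ) + 1))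

/-- `m`-th forward difference (ℂ-valued). -/
def fdiffC (m : ℕ) (h : ℝ) (f : ℝ → ℂ) (x : ℝ) : ℂ :=
  ∑ i ∈ Finset.range (m + 1), (-1 : ℂ) ^ (m - i) * (m.choose i : ℂ) * f (x + i * h)

/-- `m`-th forward difference (ℝ-valued). -/
def fdiffR (m : ℕ) (h : ℝ) (g : ℝ → ℝ) (x : ℝ) : ℝ :=
  ∑ i ∈ Finset.range (m + 1), (-1 : ℝ) ^ (m - i) * (m.choose i : ℝ) * g (x + i * h)

/-- The hat function at level `j`: `v_{j,0}`. -/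
def hatj (j : ℕ) (x : ℝ) : ℝ := hatFn ((2:ℝ) ^ j * x)

/-- sup of `L_p` norms of `m`-th differences with step `0 < h ≤ 2^{-k}`. -/
def modk (p : ℝ) (m : ℕ) (k : ℕ) (g : ℝ → ℝ) : ℝ≥0∞ :=
  ⨆ h ∈ Set.Ioc (0:ℝ) ((2:ℝ) ^ (-(k:ℤ))),
    eLpNorm (fdiffR m h g) (ENNReal.ofReal p) volume

/-- The Besov quasinorm `N(g)` built from `L_p` moduli of smoothness. -/
def NBesov (p : ℝ) (q : ℝ≥0∞) (m : ℕ) (g : ℝ → ℝ) : ℝ≥0∞ :=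
  eLpNorm g (ENNReal.ofReal p) volume +
    (if q = ⊤ then ⨆ k : ℕ, ENNReal.ofReal ((2:ℝ) ^ ((k:ℝ) / p)) * modk p m k g
     else (∑' k : ℕ,
        (ENNReal.ofReal ((2:ℝ) ^ ((k:ℝ) / p)) * modk p m k g) ^ q.toReal) ^ (1 / q.toReal))

open fwdDiff

lemma fdiffR_eq (n : ℕ) (h : ℝ) (f : ℝ → ℝ) (x : ℝ) :
    fdiffR n h f x = (fwdDiff h)^[n] f x := by
  rw [fwdDiff_iter_eq_sum_shift]
  unfold fdiffR
  refine Finset.sum_congr rfl fun i _ => ?_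
  rw [zsmul_eq_mul, nsmul_eq_mul]
  push_cast
  ring

lemma fdiffR_support {n : ℕ} {h : ℝ} {f : ℝ → ℝ} {x : ℝ}
    (hne : fdiffR n h f x ≠ 0) : ∃ i ≤ n, f (x + i * h) ≠ 0 := by
  by_contra hc
  push_neg at hc
  apply hne
  unfold fdiffR
  apply Finset.sum_eq_zero
  intro i hi
  rw [hc i (Nat.lt_succ_iff.mp (Finset.mem_range.mp hi)), mul_zero]

lemma fwdDiff_iter_bound {n : ℕ} {h A : ℝ} {f : ℝ → ℝ} (hA : ∀ y, |f y| ≤ A) (x : ℝ) :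
    |(fwdDiff h)^[n] f x| ≤ 2 ^ n * A := by
  induction n generalizing x with
  | zero => simpa using hA x
  | succ n ih =>
    rw [Function.iterate_succ_apply']
    calc |fwdDiff h ((fwdDiff h)^[n] f) x| ≤ |(fwdDiff h)^[n] f (x + h)| + |(fwdDiff h)^[n] f x| := abs_sub _ _
    _ ≤ 2 ^ n * A + 2 ^ n * A := add_le_add (ih _) (ih _)
    _ = 2 ^ (n+1) * A := by ring

lemma fdiffR_two_step (n : ℕ) (h : ℝ) (f : ℝ → ℝ) (x : ℝ) :
    fdiffR (n + 2) h f x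
      = fdiffR n h (fun y => f (y + 2*h) - 2 * f (y + h) + f y) x := by
  rw [fdiffR_eq, fdiffR_eq, Function.iterate_succ_apply, Function.iterate_succ_apply]
  have : fwdDiff h (fwdDiff h f) = fun y => f (y + 2*h) - 2 * f (y + h) + f y := by
    funext y
    simp only [fwdDiff]
    ring_nf
  rw [this]

lemma hatFn_eq (t : ℝ) : hatFn t = max (1 - |2 * t - 1|) 0 := by
  unfold hatFn
  rcases le_or_gt 0 t with h0 | h0
  · rcases le_or_gt t 1 with h1 | h1
    · rw [if_pos ⟨h0, h1⟩, max_eq_left]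
      rcases abs_cases (2*t-1) with ⟨he, _⟩ | ⟨he, _⟩ <;> linarith
    · rw [if_neg (by intro hc; linarith [hc.2]), max_eq_right]
      rw [abs_of_pos (by linarith)]; linarith
  · rw [if_neg (by intro hc; linarith [hc.1]), max_eq_right]
    rw [abs_of_neg (by linarith)]; linarith

lemma hatFn_abs_le_one (t : ℝ) : |hatFn t| ≤ 1 := by
  rw [hatFn_eq, abs_le]
  constructor
  · have := le_max_right (1 - |2 * t - 1|) 0; linarith
  · have := abs_nonneg (2*t-1)
    have : 1 - |2 * t - 1| ≤ 1 := by linarith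
    exact max_le this one_pos.le

lemma hatFn_lip (a b : ℝ) : |hatFn a - hatFn b| ≤ 2 * |a - b| := by
  rw [hatFn_eq, hatFn_eq]
  calc |max (1 - |2 * a - 1|) 0 - max (1 - |2 * b - 1|) 0|
      ≤ |(1 - |2 * a - 1|) - (1 - |2 * b - 1|)| := abs_max_sub_max_le_abs _ _ _
    _ = |(|2 * b - 1|) - (|2 * a - 1|)| := by
        rw [show (1 - |2*a-1|) - (1 - |2*b-1|) = |2*b-1| - |2*a-1| by ring]
    _ ≤ |(2 * b - 1) - (2 * a - 1)| := abs_abs_sub_abs_le_abs_sub _ _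
    _ = 2 * |a - b| := by rw [show (2*b-1) - (2*a-1) = 2*(b-a) by ring, abs_mul,
        abs_two, abs_sub_comm]

lemma hatFn_zero_left {t : ℝ} (ht : t ≤ 0) : hatFn t = 0 := by
  rw [hatFn_eq, max_eq_right]
  rw [abs_of_nonpos (by linarith)]; linarith

lemma hatFn_zero_right {t : ℝ} (ht : 1 ≤ t) : hatFn t = 0 := by
  rw [hatFn_eq, max_eq_right]
  rw [abs_of_nonneg (by linarith)]; linarith

lemma hatFn_lin1 {t : ℝ} (h0 : 0 ≤ t) (h1 : t ≤ 1/2) : hatFn t = 2 * t := by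
  rw [hatFn_eq, max_eq_left] <;> rw [abs_of_nonpos (by linarith)] <;> linarith

lemma hatFn_lin2 {t : ℝ} (h0 : 1/2 ≤ t) (h1 : t ≤ 1) : hatFn t = 2 - 2 * t := by
  rw [hatFn_eq, max_eq_left] <;> rw [abs_of_nonneg (by linarith)] <;> linarith

lemma hatFn_ne_zero {t : ℝ} (ht : hatFn t ≠ 0) : 0 ≤ t ∧ t ≤ 1 := by
  constructor
  · by_contra hc; exact ht (hatFn_zero_left (by linarith))
  · by_contra hc; exact ht (hatFn_zero_right (by linarith))

lemma two_pow_j_inv_eq (j : ℕ) : (2:ℝ) ^ (-(j:ℤ)) = ((2:ℝ) ^ j)⁻¹ := by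
  rw [zpow_neg, zpow_natCast]

lemma pow_mul_inv_succ (j : ℕ) : (2:ℝ) ^ j * ((2:ℝ) ^ (j+1))⁻¹ = 1/2 := by
  rw [pow_succ, mul_inv]
  rw [← mul_assoc, mul_inv_cancel₀ (ne_of_gt (pow_pos two_pos j)), one_mul]
  norm_num

lemma hatj_abs_le_one (j : ℕ) (x : ℝ) : |hatj j x| ≤ 1 := hatFn_abs_le_one _

lemma hatj_lip (j : ℕ) (a b : ℝ) : |hatj j a - hatj j b| ≤ 2^(j+1) * |a - b| := by
  unfold hatj
  calc |hatFn (2^j * a) - hatFn (2^j * b)| ≤ 2 * |2^j * a - 2^j * b| := hatFn_lip _ _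
    _ = 2^(j+1) * |a - b| := by
        rw [show (2:ℝ)^j * a - 2^j * b = 2^j * (a - b) by ring, abs_mul,
          abs_of_nonneg (pow_nonneg two_pos.le j)]
        ring

lemma hatj_ne_zero {j : ℕ} {x : ℝ} (hx : hatj j x ≠ 0) : 0 ≤ x ∧ x ≤ ((2:ℝ)^j)⁻¹ := by
  obtain ⟨h0, h1⟩ := hatFn_ne_zero hx
  have hp : (0:ℝ) < 2^j := pow_pos two_pos j
  constructor
  · nlinarith
  · rw [← one_div, le_div_iff₀ hp]; linarith

lemma hatj_zero_left {j : ℕ} {x : ℝ} (hx : x ≤ 0) : hatj j x = 0 :=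
  hatFn_zero_left (mul_nonpos_of_nonneg_of_nonpos (pow_nonneg two_pos.le j) hx)

lemma hatj_zero_right {j : ℕ} {x : ℝ} (hx : ((2:ℝ)^j)⁻¹ ≤ x) : hatj j x = 0 := by
  have hp : (0:ℝ) < 2^j := pow_pos two_pos j
  refine hatFn_zero_right ?_
  rw [← mul_inv_cancel₀ hp.ne']
  exact mul_le_mul_of_nonneg_left hx hp.le

lemma hatj_lin1 {j : ℕ} {x : ℝ} (h0 : 0 ≤ x) (h1 : x ≤ ((2:ℝ)^(j+1))⁻¹) :
    hatj j x = 2^(j+1) * x := by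
  have hp : (0:ℝ) < 2^j := pow_pos two_pos j
  unfold hatj
  rw [hatFn_lin1 (mul_nonneg hp.le h0) (by
    calc (2:ℝ)^j * x ≤ 2^j * ((2:ℝ)^(j+1))⁻¹ := mul_le_mul_of_nonneg_left h1 hp.le
      _ = 1/2 := pow_mul_inv_succ j)]
  rw [pow_succ]; ring

lemma hatj_lin2 {j : ℕ} {x : ℝ} (h0 : ((2:ℝ)^(j+1))⁻¹ ≤ x) (h1 : x ≤ ((2:ℝ)^j)⁻¹) :
    hatj j x = 2 - 2^(j+1) * x := by
  have hp : (0:ℝ) < 2^j := pow_pos two_pos j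
  unfold hatj
  rw [hatFn_lin2 (by
      calc (1:ℝ)/2 = 2^j * ((2:ℝ)^(j+1))⁻¹ := (pow_mul_inv_succ j).symm
        _ ≤ 2^j * x := mul_le_mul_of_nonneg_left h0 hp.le)
    (by rw [← mul_inv_cancel₀ hp.ne']; exact mul_le_mul_of_nonneg_left h1 hp.le)]
  rw [pow_succ]; ring

lemma diff2_vanish (j : ℕ) {h y : ℝ} (hpos : 0 < h)
    (H0 : ¬(y ≤ 0 ∧ 0 ≤ y + 2*h))
    (Hc : ¬(y ≤ ((2:ℝ)^(j+1))⁻¹ ∧ ((2:ℝ)^(j+1))⁻¹ ≤ y + 2*h))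
    (Hb : ¬(y ≤ ((2:ℝ)^j)⁻¹ ∧ ((2:ℝ)^j)⁻¹ ≤ y + 2*h)) :
    hatj j (y + 2*h) - 2 * hatj j (y + h) + hatj j y = 0 := by
  have hc : (0:ℝ) < ((2:ℝ)^(j+1))⁻¹ := by positivity
  have hcb : ((2:ℝ)^(j+1))⁻¹ ≤ ((2:ℝ)^j)⁻¹ := by
    apply inv_anti₀ (pow_pos two_pos j)
    exact pow_le_pow_right₀ one_le_two (Nat.le_succ j)
  rcases (not_and_or.mp H0).imp not_le.mp not_le.mp with hy | hy
  · rcases (not_and_or.mp Hc).imp not_le.mp not_le.mp with hy2 | hy2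
    · rcases (not_and_or.mp Hb).imp not_le.mp not_le.mp with hy3 | hy3
      · -- region [b, ∞)
        rw [hatj_zero_right (by linarith), hatj_zero_right (by linarith),
          hatj_zero_right (by linarith)]
        ring
      · -- region [c, b]
        rw [hatj_lin2 (by linarith) (by linarith), hatj_lin2 (by linarith) (by linarith),
          hatj_lin2 (by linarith) (by linarith)]
        ring
    · -- region [0, c]
      rw [hatj_lin1 (by linarith) (by linarith), hatj_lin1 (by linarith) (by linarith),
        hatj_lin1 (by linarith) (by linarith)]
      ring
  · -- region (-∞, 0]
    rw [hatj_zero_left (by linarith), hatj_zero_left (by linarith),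
      hatj_zero_left (by linarith)]
    ring

lemma eLp_le {p : ℝ} (hp : 0 < p) (g : ℝ → ℝ) (s : Set ℝ) (hs : MeasurableSet s)
    {A B : ℝ} (hA : 0 ≤ A) (hB : 0 ≤ B) (hbd : ∀ x, |g x| ≤ A)
    (hsupp : ∀ x, g x ≠ 0 → x ∈ s) (hvol : volume s ≤ ENNReal.ofReal B) :
    eLpNorm g (ENNReal.ofReal p) volume ≤ ENNReal.ofReal (A * B ^ (1/p)) := by
  calc eLpNorm g (ENNReal.ofReal p) volume
      ≤ eLpNorm (s.indicator fun _ => A) (ENNReal.ofReal p) volume := by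
        apply eLpNorm_mono
        intro x
        rcases eq_or_ne (g x) 0 with h | h
        · rw [h, norm_zero]; exact norm_nonneg _
        · rw [Set.indicator_of_mem (hsupp x h), Real.norm_eq_abs, Real.norm_eq_abs,
            abs_of_nonneg hA]
          exact hbd x
    _ = ‖A‖₊ * volume s ^ (1/(ENNReal.ofReal p).toReal) :=
        eLpNorm_indicator_const hs (ENNReal.ofReal_pos.mpr hp).ne' ENNReal.ofReal_ne_top
    _ ≤ ENNReal.ofReal (A * B ^ (1/p)) := by
        rw [ENNReal.toReal_ofReal hp.le, show ((‖A‖₊ : ℝ≥0∞)) = ENNReal.ofReal A from Real.enorm_eq_ofReal hA,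
          ENNReal.ofReal_mul hA, ← ENNReal.ofReal_rpow_of_nonneg hB (by positivity)]
        exact mul_le_mul_right (ENNReal.rpow_le_rpow hvol (by positivity)) _

lemma rpow_helper (a : ℕ) {p : ℝ} (hp : 0 < p) :
    (((2:ℝ)^a)⁻¹) ^ (1/p) = (2:ℝ) ^ (-(a:ℝ)/p) := by
  have h1 : ((2:ℝ)^a)⁻¹ = (2:ℝ) ^ (-(a:ℝ)) := by
    rw [Real.rpow_neg (by norm_num), Real.rpow_natCast]
  rw [h1, ← Real.rpow_mul (by norm_num)]
  congr 1
  ring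

lemma rpow_sub_helper (j k : ℕ) : (2:ℝ)^((j:ℝ)-(k:ℝ)) = (2:ℝ)^j * ((2:ℝ)^k)⁻¹ := by
  rw [Real.rpow_sub two_pos, Real.rpow_natCast, Real.rpow_natCast, div_eq_mul_inv]

lemma fdiffR_bound_one (m : ℕ) (h : ℝ) (j : ℕ) (x : ℝ) :
    |fdiffR m h (hatj j) x| ≤ 2 ^ m := by
  rw [fdiffR_eq]
  simpa using fwdDiff_iter_bound (hatj_abs_le_one j) x

lemma fdiffR_bound_lip {m : ℕ} (hm : 1 ≤ m) (j : ℕ) {h : ℝ} (h0 : 0 ≤ h) (x : ℝ) :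
    |fdiffR m h (hatj j) x| ≤ 2 ^ m * 2 ^ j * h := by
  obtain ⟨n, rfl⟩ : ∃ n, m = n + 1 := ⟨m - 1, by omega⟩
  rw [fdiffR_eq, Function.iterate_succ_apply]
  have hb : ∀ y, |fwdDiff h (hatj j) y| ≤ 2^(j+1) * h := by
    intro y
    calc |hatj j (y + h) - hatj j y| ≤ 2^(j+1) * |y + h - y| := hatj_lip j _ _
      _ = 2^(j+1) * h := by rw [show y + h - y = h by ring, abs_of_nonneg h0]
  calc |(fwdDiff h)^[n] (fwdDiff h (hatj j)) x| ≤ 2^n * (2^(j+1) * h) :=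
        fwdDiff_iter_bound hb x
    _ = 2^(n+1) * 2^j * h := by ring

lemma fdiffR_supp2 {m : ℕ} (hm : 2 ≤ m) {h : ℝ} (h0 : 0 < h) {j : ℕ} {x : ℝ}
    (hx : fdiffR m h (hatj j) x ≠ 0) :
    x ∈ Set.Icc (0 - m*h) (0:ℝ) ∪ Set.Icc (((2:ℝ)^(j+1))⁻¹ - m*h) (((2:ℝ)^(j+1))⁻¹)
      ∪ Set.Icc (((2:ℝ)^j)⁻¹ - m*h) (((2:ℝ)^j)⁻¹) := by
  obtain ⟨n, rfl⟩ : ∃ n, m = n + 2 := ⟨m - 2, by omega⟩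
  rw [fdiffR_two_step] at hx
  obtain ⟨i, him, hne⟩ := fdiffR_support hx
  have hiR : (i:ℝ) ≤ n := Nat.cast_le.mpr him
  have hi0 : (0:ℝ) ≤ (i:ℝ) := Nat.cast_nonneg i
  have hmR : ((n:ℝ) + 2) = (((n+2:ℕ)):ℝ) := by push_cast; ring
  by_contra hxs
  simp only [Set.mem_union, not_or] at hxs
  obtain ⟨⟨hs1, hs2⟩, hs3⟩ := hxs
  apply hne
  have key := diff2_vanish j h0 (y := x + i*h)
    (fun ⟨u, v⟩ => hs1 ⟨by push_cast; nlinarith, by nlinarith⟩)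
    (fun ⟨u, v⟩ => hs2 ⟨by push_cast; nlinarith, by nlinarith⟩)
    (fun ⟨u, v⟩ => hs3 ⟨by push_cast; nlinarith, by nlinarith⟩)
  calc hatj j (x + i*h + 2*h) - 2 * hatj j (x + i*h + h) + hatj j (x + i*h)
      = hatj j (x + i*h + 2*h) - 2 * hatj j (x + i*h + h) + hatj j (x + i*h) := rfl
    _ = 0 := key

/-- moduli-of-smoothness estimates for the hat functions `v_{j,0}`. -/
theorem statement18 (p : ℝ) (hp : 0 < p) (m : ℕ) (hm : 2 ≤ m) :
    ∃ C : ℝ, 0 < C ∧ ∀ j k : ℕ,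
      (modk p m k (hatj j) ≤ ENNReal.ofReal (C * (2:ℝ) ^ (-(j:ℝ) / p))) ∧
      (j < k → modk p m k (hatj j) ≤
        ENNReal.ofReal (C * (2:ℝ) ^ (-(k:ℝ) / p) * (2:ℝ) ^ ((j:ℝ) - (k:ℝ)))) := by
  refine ⟨2^m * (3*(m:ℝ)+1)^(1/p), by positivity, fun j k => ⟨?_, fun hjk => ?_⟩⟩
  · -- part (i)
    refine iSup₂_le fun h hh => ?_
    obtain ⟨hh0, hhk⟩ := hh
    refine le_trans (eLp_le hp _
      (⋃ i ∈ Finset.range (m+1), Set.Icc (-(i:ℝ)*h) (((2:ℝ)^j)⁻¹ - (i:ℝ)*h))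
      (MeasurableSet.biUnion (Finset.range (m+1)).countable_toSet
        fun i _ => measurableSet_Icc)
      (A := 2^m) (B := ((m:ℝ)+1) * ((2:ℝ)^j)⁻¹) (by positivity) (by positivity)
      (fun x => fdiffR_bound_one m h j x) ?_ ?_) ?_
    · intro x hx
      obtain ⟨i, him, hne⟩ := fdiffR_support hx
      obtain ⟨h1, h2⟩ := hatj_ne_zero hne
      exact Set.mem_biUnion (Finset.mem_range.mpr (Nat.lt_succ_of_le him))
        ⟨by linarith, by linarith⟩
    · calc volume (⋃ i ∈ Finset.range (m+1),
            Set.Icc (-(i:ℝ)*h) (((2:ℝ)^j)⁻¹ - (i:ℝ)*h))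
          ≤ ∑ i ∈ Finset.range (m+1),
            volume (Set.Icc (-(i:ℝ)*h) (((2:ℝ)^j)⁻¹ - (i:ℝ)*h)) :=
            measure_biUnion_finset_le _ _
        _ = ∑ _i ∈ Finset.range (m+1), ENNReal.ofReal (((2:ℝ)^j)⁻¹) := by
            refine Finset.sum_congr rfl fun i _ => ?_
            rw [Real.volume_Icc]
            congr 1
            ring
        _ ≤ ENNReal.ofReal (((m:ℝ)+1) * ((2:ℝ)^j)⁻¹) := by
            rw [Finset.sum_const, Finset.card_range, nsmul_eq_mul,
              ENNReal.ofReal_mul (by positivity)]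
            gcongr
            rw [← ENNReal.ofReal_natCast (m+1)]
            apply ENNReal.ofReal_le_ofReal
            push_cast
            exact le_refl _
    · apply ENNReal.ofReal_le_ofReal
      rw [Real.mul_rpow (by positivity) (by positivity), rpow_helper j hp]
      have key : ((m:ℝ)+1)^(1/p) ≤ (3*(m:ℝ)+1)^(1/p) :=
        Real.rpow_le_rpow (by positivity) (by nlinarith [Nat.cast_nonneg (α := ℝ) m])
          (by positivity)
      rw [← mul_assoc]
      exact mul_le_mul_of_nonneg_right
        (mul_le_mul_of_nonneg_left key (by positivity)) (by positivity)
  · -- part (ii)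
    refine iSup₂_le fun h hh => ?_
    obtain ⟨hh0, hhk⟩ := hh
    rw [two_pow_j_inv_eq] at hhk
    refine le_trans (eLp_le hp _
      (Set.Icc (0 - (m:ℝ)*h) (0:ℝ) ∪ Set.Icc (((2:ℝ)^(j+1))⁻¹ - (m:ℝ)*h) (((2:ℝ)^(j+1))⁻¹)
        ∪ Set.Icc (((2:ℝ)^j)⁻¹ - (m:ℝ)*h) (((2:ℝ)^j)⁻¹))
      ((measurableSet_Icc.union measurableSet_Icc).union measurableSet_Icc)
      (A := 2^m * 2^j * h) (B := 3*(m:ℝ) * ((2:ℝ)^k)⁻¹)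
      (by positivity) (by positivity)
      (fun x => fdiffR_bound_lip (by omega) j hh0.le x)
      (fun x hx => fdiffR_supp2 hm hh0 hx) ?_) ?_
    · calc volume _ ≤ volume (Set.Icc (0 - (m:ℝ)*h) (0:ℝ) ∪
              Set.Icc (((2:ℝ)^(j+1))⁻¹ - (m:ℝ)*h) (((2:ℝ)^(j+1))⁻¹))
            + volume (Set.Icc (((2:ℝ)^j)⁻¹ - (m:ℝ)*h) (((2:ℝ)^j)⁻¹)) :=
            measure_union_le _ _
        _ ≤ (volume (Set.Icc (0 - (m:ℝ)*h) (0:ℝ)) +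
              volume (Set.Icc (((2:ℝ)^(j+1))⁻¹ - (m:ℝ)*h) (((2:ℝ)^(j+1))⁻¹)))
            + volume (Set.Icc (((2:ℝ)^j)⁻¹ - (m:ℝ)*h) (((2:ℝ)^j)⁻¹)) :=
            add_le_add (measure_union_le _ _) le_rfl
        _ = ENNReal.ofReal ((m:ℝ)*h) + ENNReal.ofReal ((m:ℝ)*h) + ENNReal.ofReal ((m:ℝ)*h) := by
            rw [Real.volume_Icc, Real.volume_Icc, Real.volume_Icc]
            norm_num
        _ = ENNReal.ofReal (3*(m:ℝ)*h) := by
            rw [← ENNReal.ofReal_add (by positivity) (by positivity),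
              ← ENNReal.ofReal_add (by positivity) (by positivity)]
            congr 1
            ring
        _ ≤ ENNReal.ofReal (3*(m:ℝ) * ((2:ℝ)^k)⁻¹) := by
            apply ENNReal.ofReal_le_ofReal
            have : (0:ℝ) ≤ 3*(m:ℝ) := by positivity
            nlinarith
    · apply ENNReal.ofReal_le_ofReal
      rw [Real.mul_rpow (by positivity) (by positivity), rpow_helper k hp]
      have key : (3*(m:ℝ))^(1/p) ≤ (3*(m:ℝ)+1)^(1/p) :=
        Real.rpow_le_rpow (by positivity) (by linarith) (by positivity)
      rw [rpow_sub_helper j k]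
      have h2k : (0:ℝ) < ((2:ℝ)^k)⁻¹ := by positivity
      calc 2^m * 2^j * h * ((3*(m:ℝ))^(1/p) * (2:ℝ)^(-(k:ℝ)/p))
          ≤ 2^m * 2^j * ((2:ℝ)^k)⁻¹ * ((3*(m:ℝ)+1)^(1/p) * (2:ℝ)^(-(k:ℝ)/p)) := by
            apply mul_le_mul
            · exact mul_le_mul_of_nonneg_left hhk (by positivity)
            · exact mul_le_mul_of_nonneg_right key (by positivity)
            · positivity
            · positivity
        _ = 2^m * (3*(m:ℝ)+1)^(1/p) * (2:ℝ)^(-(k:ℝ)/p) * ((2:ℝ)^j * ((2:ℝ)^k)⁻¹) := by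
            ring
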